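/- Let r, k ≥ 1, reals α₁,…,α_r, β₁,…,β_k with 1,α₁,…,α_r,β₁,…,β_k linearly independent over ℚ, and let m_ν, ζ_ν, M_ν be the best-approximation data of (α₁,…,α_r). Fix ν. Suppose that for every integer point (m₀,…,m_{r+k}) with max_{1≤j≤r+k}|m_j| ≤ M_{ν+1} and (m_{r+1},…,m_{r+k}) ≠ (0,…,0), one has |m₀ + Σ_{j=1}^r m_jα_j + Σ_{i=1}^k m_{r+i}β_i| ≥ ζ_ν. Then the point m_ν* = (m_{0,ν},…,m_{r,ν},0,…,0) ∈ ℤ^{r+k+1} is a best approximation for the (r+k)-tuple (α₁,…,α_r,β₁,…,β_k). -/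

import Mathlib

open Finset MeasureTheory

/-- The value of the linear form: `ζ(m) = m₀ + Σ mⱼ αⱼ`. -/
def zetaF {r : ℕ} (α : Fin r → ℝ) (m₀ : ℤ) (m : Fin r → ℤ) : ℝ :=
  (m₀ : ℝ) + ∑ j, (m j : ℝ) * α j

/-- `M(m) = max_{1 ≤ j ≤ r} |m_j|` (as a natural number). -/
def Mnorm {r : ℕ} (m : Fin r → ℤ) : ℕ :=
  Finset.univ.sup fun j => (m j).natAbs

/-- `m = (m₀, m₁, …, m_r)` is a best approximation (in the sense of linear form)
for `α₁, …, α_r`. -/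
def IsBestApprox {r : ℕ} (α : Fin r → ℝ) (m₀ : ℤ) (m : Fin r → ℤ) : Prop :=
  m ≠ 0 ∧ 0 < zetaF α m₀ m ∧
    ∀ (n₀ : ℤ) (n : Fin r → ℤ), n ≠ 0 → Mnorm n ≤ Mnorm m →
      zetaF α m₀ m ≤ |zetaF α n₀ n|

/-- `(mz ν, m ν)` is the sequence of all best approximations, ordered by
strictly increasing `M_ν`. -/
def IsBASeq {r : ℕ} (α : Fin r → ℝ) (mz : ℕ → ℤ) (m : ℕ → Fin r → ℤ) : Prop :=
  (∀ ν, IsBestApprox α (mz ν) (m ν)) ∧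
  StrictMono (fun ν => Mnorm (m ν)) ∧
  ∀ (p₀ : ℤ) (p : Fin r → ℤ), IsBestApprox α p₀ p → ∃ ν, p₀ = mz ν ∧ p = m ν

/-- `1, α₁, …, α_r` are linearly independent over `ℚ`. -/
def LinIndepWithOne {r : ℕ} (α : Fin r → ℝ) : Prop :=
  LinearIndependent ℚ (Fin.cons (1 : ℝ) α : Fin (r + 1) → ℝ)

/-- `(α₁, …, α_r)` is a `ψ`-singular tuple (in the sense of linear form). -/
def IsPsiSingular {r : ℕ} (α : Fin r → ℝ) (ψ : ℝ → ℝ) : Prop :=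
  ∀ T : ℝ, 1 < T → ∃ n : Fin r → ℤ, n ≠ 0 ∧ (∀ j, (|n j| : ℝ) ≤ T) ∧
    ∃ n₀ : ℤ, |zetaF α n₀ n| < ψ T


lemma zetaF_append {r k : ℕ} (α : Fin r → ℝ) (β : Fin k → ℝ) (n₀ : ℤ) (n : Fin (r+k) → ℤ) :
    zetaF (Fin.append α β) n₀ n =
      (n₀ : ℝ) + ∑ j, ((n (Fin.castAdd k j) : ℝ) * α j)
        + ∑ i, ((n (Fin.natAdd r i) : ℝ) * β i) := by
  unfold zetaF
  rw [Fin.sum_univ_add]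
  simp [Fin.append_left, Fin.append_right, add_assoc]

lemma Mnorm_append_zero {r k : ℕ} (u : Fin r → ℤ) :
    Mnorm (Fin.append u (0 : Fin k → ℤ)) = Mnorm u := by
  apply le_antisymm
  · apply Finset.sup_le
    intro i _
    refine Fin.addCases (fun j => ?_) (fun j => ?_) i
    · simpa [Fin.append_left, Mnorm] using Finset.le_sup (f := fun j => (u j).natAbs) (Finset.mem_univ j)
    · simp [Fin.append_right]
  · apply Finset.sup_le
    intro j _
    have : (u j).natAbs = ((Fin.append u (0 : Fin k → ℤ)) (Fin.castAdd k j)).natAbs := by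
      simp [Fin.append_left]
    rw [this]
    exact Finset.le_sup (f := fun i => ((Fin.append u (0 : Fin k → ℤ)) i).natAbs) (Finset.mem_univ _)

/-- if no small value of the extended linear form exists with coefficients
bounded by `M_{ν+1}`, then `m_ν* = (m_ν, 0, …, 0)` is a best approximation of the extended
tuple. -/
theorem stmt19 (r k : ℕ) (hr : 1 ≤ r) (hk : 1 ≤ k) (α : Fin r → ℝ) (β : Fin k → ℝ)
    (hαβ : LinIndepWithOne (Fin.append α β))
    (mz : ℕ → ℤ) (m : ℕ → Fin r → ℤ) (hBA : IsBASeq α mz m) (ν : ℕ)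
    (hyp : ∀ (n₀ : ℤ) (n : Fin r → ℤ) (p : Fin k → ℤ),
      (∀ j, (n j).natAbs ≤ Mnorm (m (ν + 1))) →
      (∀ i, (p i).natAbs ≤ Mnorm (m (ν + 1))) → p ≠ 0 →
      zetaF α (mz ν) (m ν) ≤
        |(n₀ : ℝ) + ∑ j, (n j : ℝ) * α j + ∑ i, (p i : ℝ) * β i|) :
    IsBestApprox (Fin.append α β) (mz ν) (Fin.append (m ν) (0 : Fin k → ℤ)) := by
  obtain ⟨hBA1, hBA2, -⟩ := hBA
  obtain ⟨hm_ne, hm_pos, hm_min⟩ := hBA1 ν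
  have hzeta : zetaF (Fin.append α β) (mz ν) (Fin.append (m ν) (0 : Fin k → ℤ))
      = zetaF α (mz ν) (m ν) := by
    rw [zetaF_append]
    simp [Fin.append_left, Fin.append_right, zetaF]
  refine ⟨?_, ?_, ?_⟩
  · intro h
    apply hm_ne
    funext j
    have := congrFun h (Fin.castAdd k j)
    simpa [Fin.append_left] using this
  · rw [hzeta]; exact hm_pos
  · intro n₀ n hn hMn
    rw [Mnorm_append_zero] at hMn
    set n₁ : Fin r → ℤ := fun j => n (Fin.castAdd k j) with hn₁
    set n₂ : Fin k → ℤ := fun i => n (Fin.natAdd r i) with hn₂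
    by_cases h2 : n₂ = 0
    · have hn1 : n₁ ≠ 0 := by
        intro h1
        apply hn
        funext i
        refine Fin.addCases (fun j => ?_) (fun j => ?_) i
        · exact congrFun h1 j
        · exact congrFun h2 j
      have hz2 : ∀ i, n (Fin.natAdd r i) = 0 := fun i => congrFun h2 i
      have heq : zetaF (Fin.append α β) n₀ n = zetaF α n₀ n₁ := by
        rw [zetaF_append]
        simp [zetaF, hz2, hn₁]
      have hM1 : Mnorm n₁ ≤ Mnorm (m ν) := by
        refine le_trans (Finset.sup_le fun j _ => ?_) hMn
        exact Finset.le_sup (f := fun i => (n i).natAbs) (Finset.mem_univ _)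
      rw [hzeta, heq]
      exact hm_min n₀ n₁ hn1 hM1
    · have hle : Mnorm n ≤ Mnorm (m (ν + 1)) :=
        le_trans hMn (le_of_lt (hBA2 (Nat.lt_succ_self ν)))
      have hb1 : ∀ j, (n₁ j).natAbs ≤ Mnorm (m (ν + 1)) := fun j =>
        le_trans (Finset.le_sup (f := fun i => (n i).natAbs) (Finset.mem_univ _)) hle
      have hb2 : ∀ i, (n₂ i).natAbs ≤ Mnorm (m (ν + 1)) := fun i =>
        le_trans (Finset.le_sup (f := fun i => (n i).natAbs) (Finset.mem_univ _)) hle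
      rw [hzeta, zetaF_append]
      exact hyp n₀ n₁ n₂ hb1 hb2 h2
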